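/- If the polymatroid f on ground set M is tight (f(M∖{i}) = f(M) for all i ∈ M), then the double dual equals f: (f⊥)⊥ = f; moreover f⊥({i}) = f({i}) for every singleton i. -/
import Mathlib


/-- For a tight polymatroid the double dual equals the polymatroid itself, and the
dual has the same value on singletons. -/
theorem tight_double_dual {α : Type*} [DecidableEq α] (M : Finset α) (f : Finset α → ℝ)
    (hempty : f ∅ = 0)
    (hnonneg : ∀ A, A ⊆ M → 0 ≤ f A)
    (hmono : ∀ A B : Finset α, A ⊆ B → B ⊆ M → f A ≤ f B)
    (hsub : ∀ A B : Finset α, A ⊆ M → B ⊆ M → f (A ∪ B) + f (A ∩ B) ≤ f A + f B)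
    (htight : ∀ i ∈ M, f (M \ {i}) = f M)
    (fd fdd : Finset α → ℝ)
    (hfd : ∀ A : Finset α, fd A = f (M \ A) + (∑ j ∈ A, f {j}) - f M)
    (hfdd : ∀ A : Finset α, fdd A = fd (M \ A) + (∑ j ∈ A, fd {j}) - fd M) :
    (∀ A, A ⊆ M → fdd A = f A) ∧ (∀ i ∈ M, fd {i} = f {i}) := by
  have hsing : ∀ i ∈ M, fd {i} = f {i} := by
    intro i hi
    rw [hfd, Finset.sum_singleton, htight i hi]
    ring
  refine ⟨?_, hsing⟩
  intro A hA
  rw [hfdd, hfd (M \ A), hfd M, Finset.sdiff_sdiff_self_left, (Finset.inter_eq_right).2 hA, Finset.sdiff_self, hempty]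
  have hsum : ∀ j ∈ A, fd {j} = f {j} := fun j hj => hsing j (hA hj)
  rw [Finset.sum_congr rfl hsum]
  have hsplit : (∑ j ∈ M, f {j}) = (∑ j ∈ M \ A, f {j}) + ∑ j ∈ A, f {j} :=
    (Finset.sum_sdiff hA).symm
  rw [hsplit]; ring
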